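/- arXiv:1802.03695 — 2 statements merged into one kernel-verified Lean document; each statement's English description precedes it below -/
import Mathlib

section
/- Let G be the subgroup of the permutation group of (ZMod 2)⟦X⟧ generated by the four affine bijections A, B, C, D. Then G is isomorphic (as a group) to the rank-2 lamplighter group (ℤ₂ × ℤ₂) ≀ ℤ, i.e., to the semidirect product (⨁_{i : ℤ} (ZMod 2 × ZMod 2)) ⋊ ℤ, where the generator of ℤ acts on the direct sum (equivalently, on finitely supported functions ℤ →₀ (ZMod 2 × ZMod 2)) by shifting the index. -/
open PowerSeries

noncomputable section

/-- The ring of formal power series over the field with two elements. -/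
abbrev R : Type := PowerSeries (ZMod 2)

/-- The multiplier `f = (1+X+X²)·(1+X²)⁻¹`. -/
def f : R := (1 + X + X ^ 2) * (1 + X ^ 2)⁻¹

/-- `g_a = ((1+X)⁻¹)³`. -/
def ga : R := ((1 + X)⁻¹) ^ 3

/-- `g_b = (1+X+X²)·((1+X)⁻¹)³`. -/
def gb : R := (1 + X + X ^ 2) * ((1 + X)⁻¹) ^ 3

/-- `g_c = X·((1+X)⁻¹)³`. -/
def gc : R := X * ((1 + X)⁻¹) ^ 3

/-- `g_d = X²·((1+X)⁻¹)³`. -/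
def gd : R := X ^ 2 * ((1 + X)⁻¹) ^ 3

lemma constantCoeff_f_ne_zero : constantCoeff f ≠ 0 := by
  simp [f, map_mul, map_add, map_pow, PowerSeries.constantCoeff_inv]

/-- `f` as a unit of `R`. -/
def fU : Rˣ := Units.mkOfMulEqOne f f⁻¹ (PowerSeries.mul_inv_cancel f constantCoeff_f_ne_zero)

/-- The affine bijection `h ↦ h·u + g` for a unit `u` and `g : R`. -/
def affine (u : Rˣ) (g : R) : Equiv.Perm R := (Units.mulRight u).trans (Equiv.addRight g)

@[simp] lemma affine_apply (u : Rˣ) (g h : R) : affine u g h = h * u + g := rfl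

/-- The affine bijection `A : h ↦ h·f + g_a`. -/
def A : Equiv.Perm R := affine fU ga

/-- The affine bijection `B : h ↦ h·f + g_b`. -/
def B : Equiv.Perm R := affine fU gb

/-- The affine bijection `C : h ↦ h·f + g_c`. -/
def C : Equiv.Perm R := affine fU gc

/-- The affine bijection `D : h ↦ h·f + g_d`. -/
def D : Equiv.Perm R := affine fU gd

end
noncomputable section

/-- The shift automorphism of `⨁_{i : ℤ} (ZMod 2 × ZMod 2)`, realized as finitely supported
functions `ℤ →₀ (ZMod 2 × ZMod 2)`: the generator of `ℤ` acts by shifting the index. -/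
def shiftEquiv : (ℤ →₀ (ZMod 2 × ZMod 2)) ≃+ (ℤ →₀ (ZMod 2 × ZMod 2)) :=
  Finsupp.domCongr (Equiv.addRight (1 : ℤ))

/-- The action of `ℤ` on the base group by index shifts. -/
def shiftAction : Multiplicative ℤ →* MulAut (Multiplicative (ℤ →₀ (ZMod 2 × ZMod 2))) :=
  zpowersHom _ (AddEquiv.toMultiplicative shiftEquiv)

/-- The rank-2 lamplighter group `(ℤ₂ × ℤ₂) ≀ ℤ`, as the semidirect product
`(⨁_{i : ℤ} (ZMod 2 × ZMod 2)) ⋊ ℤ` with `ℤ` acting by shifting the index. -/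
def Lamplighter : Type :=
  SemidirectProduct (Multiplicative (ℤ →₀ (ZMod 2 × ZMod 2))) (Multiplicative ℤ) shiftAction

instance : Group Lamplighter := SemidirectProduct.instGroup

namespace AutLamp

lemma perm_apply_inv_self (e : Equiv.Perm R) (x : R) : e (e⁻¹ x) = x := e.apply_symm_apply x

abbrev V : Type := ZMod 2 × ZMod 2

/-- `t = (1+X)⁻¹`. -/
def t : R := (1 + X : R)⁻¹

lemma tq : t * (1 + X : R) = 1 := PowerSeries.inv_mul_cancel _ (by simp)

lemma two_eq_zero : (2 : R) = 0 := by
  rw [← map_ofNat (PowerSeries.C : ZMod 2 →+* R) 2, show (2 : ZMod 2) = 0 by decide, map_zero]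

lemma add_self (x : R) : x + x = 0 := by linear_combination x * two_eq_zero

@[simp] lemma fU_val : (fU : R) = f := rfl

lemma f_eq : f = (1 + X + X ^ 2) * t ^ 2 := by
  have h : (1 + X ^ 2 : R)⁻¹ = t ^ 2 := by
    rw [PowerSeries.inv_eq_iff_mul_eq_one (by simp)]
    have : (1 + X ^ 2 : R) = (1 + X) ^ 2 := by linear_combination (-X : R) * two_eq_zero
    rw [this, ← mul_pow, tq, one_pow]
  rw [f, h]

lemma ga_eq : ga = t ^ 3 := rfl
lemma gb_eq : gb = (1 + X + X ^ 2) * t ^ 3 := rfl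
lemma gc_eq : gc = X * t ^ 3 := rfl
lemma gd_eq : gd = X ^ 2 * t ^ 3 := rfl

-- the basic char-2 identities
lemma id_ga : t + t ^ 2 + t * f = ga := by
  rw [ga_eq, f_eq]
  linear_combination (X * t ^ 2 + t) * tq + t * two_eq_zero

lemma id_gb : t * f = gb := by rw [gb_eq, f_eq]; ring

lemma id_gc : t + t * f = gc := by
  rw [gc_eq, f_eq]
  linear_combination (t ^ 2 * (1 + X) + t) * tq + (t - X * t ^ 3) * two_eq_zero

lemma id_gd : t ^ 2 + t * f = gd := by
  rw [gd_eq, f_eq]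
  linear_combination t ^ 2 * tq + t ^ 2 * two_eq_zero

lemma id_ad : ga = gd + t := by
  rw [ga_eq, gd_eq]
  linear_combination (t ^ 2 * (1 + X) + t) * tq - (X * t ^ 3 + X ^ 2 * t ^ 3) * two_eq_zero

lemma id_ac : ga = gc + t ^ 2 := by
  rw [ga_eq, gc_eq]
  linear_combination t ^ 2 * tq - X * t ^ 3 * two_eq_zero



/-- `f^n` for `n : ℤ`. -/
def F (n : ℤ) : R := ((fU ^ n : Rˣ) : R)

lemma F_zero : F 0 = 1 := by simp [F]
lemma F_one : F 1 = f := by simp [F]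
lemma F_add (m n : ℤ) : F (m + n) = F m * F n := by rw [F, zpow_add, Units.val_mul]; rfl
lemma F_natCast (n : ℕ) : F n = f ^ n := by
  rw [F, zpow_natCast, Units.val_pow_eq_pow_val, fU_val]

def term (n : ℤ) (ab : V) : R := (ab.1 • t + ab.2 • t ^ 2) * F n

lemma term_zero (n : ℤ) : term n 0 = 0 := by simp [term]

lemma term_add (n : ℤ) (a b : V) : term n (a + b) = term n a + term n b := by
  simp only [term, Prod.fst_add, Prod.snd_add, add_smul]; ring

lemma term_shift (k n : ℤ) (ab : V) : term (n + k) ab = term n ab * F k := by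
  rw [term, term, F_add]; ring

/-- The translation part associated to a lamp configuration. -/
def θ (w : ℤ →₀ V) : R := w.sum term

lemma θ_zero : θ 0 = 0 := by simp [θ]

lemma θ_add (w w' : ℤ →₀ V) : θ (w + w') = θ w + θ w' :=
  Finsupp.sum_add_index (fun n _ => term_zero n) (fun n _ => term_add n)

lemma θ_single (n : ℤ) (ab : V) : θ (Finsupp.single n ab) = term n ab :=
  Finsupp.sum_single_index (term_zero n)

lemma θ_shift (k : ℤ) (w : ℤ →₀ V) :
    θ (Finsupp.equivMapDomain (Equiv.addRight k) w) = θ w * F k := by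
  induction w using Finsupp.induction_linear with
  | zero => simp [θ_zero]
  | add u v hu hv =>
      have hE : Finsupp.equivMapDomain (Equiv.addRight k) (u + v)
          = Finsupp.equivMapDomain (Equiv.addRight k) u
            + Finsupp.equivMapDomain (Equiv.addRight k) v := by
        rw [← Finsupp.domCongr_apply, map_add, Finsupp.domCongr_apply, Finsupp.domCongr_apply]
      rw [hE, θ_add, θ_add, hu, hv, add_mul]
  | single n ab =>
      rw [Finsupp.equivMapDomain_single, θ_single, θ_single, Equiv.coe_addRight, term_shift]

lemma θ_inj' : True := trivial


-- ## Polynomial side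

def pp : Polynomial (ZMod 2) := 1 + Polynomial.X + Polynomial.X ^ 2
def qq : Polynomial (ZMod 2) := 1 + Polynomial.X
def gam (ab : V) : Polynomial (ZMod 2) := Polynomial.C ab.1 * qq + Polynomial.C ab.2

lemma coe_pp : ((pp : Polynomial (ZMod 2)) : R) = 1 + X + X ^ 2 := by
  simp [pp, Polynomial.coe_add, Polynomial.coe_one, Polynomial.coe_X, Polynomial.coe_pow]

lemma coe_qq : ((qq : Polynomial (ZMod 2)) : R) = 1 + X := by
  simp [qq, Polynomial.coe_add, Polynomial.coe_one, Polynomial.coe_X]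

lemma qq_ne : qq ≠ 0 := by
  intro h
  have := congrArg (fun P => Polynomial.coeff P 0) h
  simp [qq] at this

lemma natDegree_pp : pp.natDegree = 2 := by unfold pp; compute_degree!

lemma pp_ne : pp ≠ 0 := by
  intro h
  have := congrArg (fun P => Polynomial.coeff P 0) h
  simp [pp] at this

lemma pp_prime : Prime pp := by
  have hroots : pp.roots = 0 := by
    rw [Multiset.eq_zero_iff_forall_notMem]
    intro a ha
    rw [Polynomial.mem_roots pp_ne] at ha
    have hev : Polynomial.eval a pp = 1 + a + a ^ 2 := by simp [pp]
    have hall : ∀ b : ZMod 2, (1 : ZMod 2) + b + b ^ 2 ≠ 0 := by decide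
    exact hall a (hev ▸ ha)
  have hirr : Irreducible pp :=
    (Polynomial.irreducible_iff_roots_eq_zero_of_degree_le_three
      (by rw [natDegree_pp]) (by rw [natDegree_pp]; norm_num)).mpr hroots
  exact hirr.prime

lemma pp_not_dvd_qq : ¬ pp ∣ qq := by
  intro h
  have h1 := Polynomial.natDegree_le_of_dvd h qq_ne
  have h2 : qq.natDegree ≤ 1 := by unfold qq; compute_degree
  rw [natDegree_pp] at h1; omega

lemma gam_ne {ab : V} (h : ab ≠ 0) : gam ab ≠ 0 := by
  intro h0
  have h1 := congrArg (fun P => Polynomial.coeff P 1) h0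
  have h2 := congrArg (fun P => Polynomial.coeff P 0) h0
  simp [gam, qq, mul_add] at h1 h2
  apply h
  have : ab.1 = 0 := h1
  ext
  · exact this
  · simpa [this] using h2

lemma pp_not_dvd_gam {ab : V} (h : ab ≠ 0) : ¬ pp ∣ gam ab := by
  intro hdvd
  have h1 := Polynomial.natDegree_le_of_dvd hdvd (gam_ne h)
  have h2 : (gam ab).natDegree ≤ 1 := by unfold gam qq; compute_degree
  rw [natDegree_pp] at h1; omega

lemma poly_core (M : ℕ) (c : ℕ → V)
    (h : ∑ n ∈ Finset.range (M + 1), gam (c n) * pp ^ n * qq ^ (2 * (M - n)) = 0) :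
    c 0 = 0 := by
  by_contra hc
  rw [Finset.sum_range_succ'] at h
  have hdvd : pp ∣ gam (c 0) * pp ^ 0 * qq ^ (2 * (M - 0)) := by
    have heq : gam (c 0) * pp ^ 0 * qq ^ (2 * (M - 0))
        = -∑ i ∈ Finset.range M, gam (c (i + 1)) * pp ^ (i + 1) * qq ^ (2 * (M - (i + 1))) := by
      exact eq_neg_of_add_eq_zero_right h
    rw [heq]
    refine dvd_neg.mpr (Finset.dvd_sum fun i _ => ?_)
    exact ((dvd_pow_self pp (Nat.succ_ne_zero i)).mul_left _).mul_right _
  rw [pow_zero, mul_one] at hdvd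
  rcases pp_prime.2.2 _ _ hdvd with h1 | h1
  · exact pp_not_dvd_gam hc h1
  · exact pp_not_dvd_qq (pp_prime.dvd_of_dvd_pow h1)

lemma per_term (M n : ℕ) (hn : n ≤ M) (ab : V) :
    term (n : ℤ) ab * (1 + X : R) ^ (2 * M + 2)
      = ((gam ab * pp ^ n * qq ^ (2 * (M - n)) : Polynomial (ZMod 2)) : R) := by
  have hcoe : ((gam ab * pp ^ n * qq ^ (2 * (M - n)) : Polynomial (ZMod 2)) : R)
      = (PowerSeries.C ab.1 * (1 + X) + PowerSeries.C ab.2)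
        * (1 + X + X ^ 2) ^ n * (1 + X) ^ (2 * (M - n)) := by
    simp [gam, Polynomial.coe_mul, Polynomial.coe_add, Polynomial.coe_pow, Polynomial.coe_C,
      coe_pp, coe_qq]
  have hsplit : (1 + X : R) ^ (2 * M + 2)
      = (1 + X) ^ (2 * n) * ((1 + X) ^ (2 * (M - n)) * (1 + X) ^ 2) := by
    rw [← pow_add, ← pow_add]; congr 1; omega
  have h2n : t ^ (2 * n) * (1 + X : R) ^ (2 * n) = 1 := by
    rw [← mul_pow, tq, one_pow]
  have hF : F (n : ℤ) = (1 + X + X ^ 2) ^ n * t ^ (2 * n) := by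
    rw [F_natCast, f_eq, mul_pow, ← pow_mul]
  rw [term, hF, hsplit, hcoe, PowerSeries.smul_eq_C_mul, PowerSeries.smul_eq_C_mul]
  linear_combination ((PowerSeries.C ab.1 * t + PowerSeries.C ab.2 * t ^ 2)
      * (1 + X : R) ^ 2 * (1 + X + X ^ 2) ^ n * (1 + X) ^ (2 * (M - n))) * h2n
    + ((1 + X + X ^ 2 : R) ^ n * (1 + X) ^ (2 * (M - n))
      * (PowerSeries.C ab.1 * (1 + X) + PowerSeries.C ab.2 * (t * (1 + X) + 1))) * tq

lemma theta_nonneg_zero (v : ℤ →₀ V) (hneg : ∀ n : ℤ, n < 0 → v n = 0) (h : θ v = 0) :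
    v 0 = 0 := by
  set M : ℕ := v.support.sup (fun n => n.toNat) with hM
  have hsub : v.support ⊆ (Finset.range (M + 1)).map ⟨(Nat.cast : ℕ → ℤ), Nat.cast_injective⟩ := by
    intro n hn
    have hge : 0 ≤ n := by
      by_contra hlt
      exact (Finsupp.mem_support_iff.mp hn) (hneg n (by omega))
    have hle : n.toNat ≤ M := Finset.le_sup (f := fun n : ℤ => n.toNat) hn
    rw [Finset.mem_map]
    exact ⟨n.toNat, Finset.mem_range.mpr (by omega), by simp; omega⟩
  have key : ((∑ n ∈ Finset.range (M + 1),
        gam (v (n : ℤ)) * pp ^ n * qq ^ (2 * (M - n)) : Polynomial (ZMod 2)) : R)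
      = θ v * (1 + X) ^ (2 * M + 2) := by
    rw [← Polynomial.coeToPowerSeries.ringHom_apply, map_sum]
    rw [θ, Finsupp.sum_of_support_subset v hsub term (fun i _ => term_zero i),
      Finset.sum_map, Finset.sum_mul]
    refine Finset.sum_congr rfl fun n hn => ?_
    simp only [Function.Embedding.coeFn_mk]
    rw [Polynomial.coeToPowerSeries.ringHom_apply,
      ← per_term M n (by have := Finset.mem_range.mp hn; omega)]
  rw [h, zero_mul] at key
  have hzero : (∑ n ∈ Finset.range (M + 1),
      gam (v (n : ℤ)) * pp ^ n * qq ^ (2 * (M - n))) = 0 :=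
    Polynomial.coe_eq_zero_iff.mp key
  have := poly_core M (fun n => v (n : ℤ)) hzero
  simpa using this

lemma θ_inj {w : ℤ →₀ V} (h : θ w = 0) : w = 0 := by
  by_contra hw
  have hne : w.support.Nonempty := Finsupp.support_nonempty_iff.mpr hw
  set m := w.support.min' hne with hm
  set v := Finsupp.equivMapDomain (Equiv.addRight (-m)) w with hv
  have hv0 : θ v = 0 := by rw [hv, θ_shift, h, zero_mul]
  have happ : ∀ n : ℤ, v n = w (n + m) := by
    intro n
    rw [hv, Finsupp.equivMapDomain_apply]
    congr 1
    simp
  have hvneg : ∀ n : ℤ, n < 0 → v n = 0 := by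
    intro n hn
    rw [happ]
    by_contra hnz
    have : m ≤ n + m := w.support.min'_le _ (Finsupp.mem_support_iff.mpr hnz)
    omega
  have h0 : v 0 = 0 := theta_nonneg_zero v hvneg hv0
  have hmem : w m ≠ 0 := Finsupp.mem_support_iff.mp (w.support.min'_mem hne)
  apply hmem
  rw [← h0, happ, zero_add]

lemma F_inj {k : ℤ} (h : fU ^ k = 1) : k = 0 := by
  by_contra hk
  obtain ⟨l, hl, hfl⟩ : ∃ l : ℕ, l ≠ 0 ∧ fU ^ (l : ℤ) = 1 := by
    rcases lt_or_gt_of_ne hk with hneg | hpos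
    · exact ⟨(-k).toNat, by omega, by rw [show ((-k).toNat : ℤ) = -k by omega, zpow_neg, h, inv_one]⟩
    · exact ⟨k.toNat, by omega, by rw [show (k.toNat : ℤ) = k by omega]; exact h⟩
  have hfm : f ^ l = 1 := by
    have := congrArg (fun u : Rˣ => (u : R)) hfl
    simpa [Units.val_pow_eq_pow_val] using this
  have h2n : t ^ (2 * l) * (1 + X : R) ^ (2 * l) = 1 := by
    rw [← mul_pow, tq, one_pow]
  rw [f_eq] at hfm
  rw [mul_pow, ← pow_mul] at hfm
  have hkey : (1 + X + X ^ 2 : R) ^ l = (1 + X : R) ^ (2 * l) := by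
    linear_combination ((1 + X : R) ^ (2 * l)) * hfm - ((1 + X + X ^ 2 : R) ^ l) * h2n
  have hpoly : pp ^ l = qq ^ (2 * l) := by
    have hco : ((pp ^ l : Polynomial (ZMod 2)) : R) = ((qq ^ (2 * l) : Polynomial (ZMod 2)) : R) := by
      rw [Polynomial.coe_pow, Polynomial.coe_pow, coe_pp, coe_qq]; exact hkey
    exact Polynomial.coe_inj.mp hco
  have hdvd : pp ∣ qq ^ (2 * l) := hpoly ▸ dvd_pow_self pp hl
  exact pp_not_dvd_qq (pp_prime.dvd_of_dvd_pow hdvd)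

-- ## The permutation homomorphisms

/-- Translation by `x` as a permutation. -/
def tr (x : R) : Equiv.Perm R := Equiv.addRight x

@[simp] lemma tr_apply (x h : R) : tr x h = h + x := rfl

lemma tr_zero : tr 0 = 1 := by ext h; simp

lemma tr_add (x y : R) : tr (x + y) = tr x * tr y := by
  ext h; simp [Equiv.Perm.mul_apply]; ring

/-- The hom from lamp configurations to translations. -/
def f₁ : Multiplicative (ℤ →₀ V) →* Equiv.Perm R where
  toFun w := tr (θ w.toAdd)
  map_one' := by
    show tr (θ (Multiplicative.toAdd 1)) = 1
    rw [toAdd_one, θ_zero, tr_zero]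
  map_mul' x y := by
    show tr (θ (Multiplicative.toAdd (x * y))) = _
    rw [toAdd_mul, θ_add, tr_add]

lemma f₁_apply (w : Multiplicative (ℤ →₀ V)) (h : R) : f₁ w h = h + θ w.toAdd := rfl

/-- Multiplication by a unit, as a hom to permutations. -/
def mulR : Rˣ →* Equiv.Perm R where
  toFun u := affine u 0
  map_one' := by ext h; simp
  map_mul' u v := by ext h; simp [Equiv.Perm.mul_apply]; ring

lemma mulR_apply (u : Rˣ) (h : R) : mulR u h = h * u := by simp [mulR]

def f₂ : Multiplicative ℤ →* Equiv.Perm R := mulR.comp (zpowersHom Rˣ fU)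

lemma f₂_apply (g : Multiplicative ℤ) (h : R) : f₂ g h = h * F g.toAdd := by
  show (mulR (zpowersHom Rˣ fU g)) h = _
  rw [zpowersHom_apply, mulR_apply, F]

lemma shiftAction_apply (k : ℤ) (x : Multiplicative (ℤ →₀ V)) :
    (shiftAction (Multiplicative.ofAdd k)) x
      = Multiplicative.ofAdd (Finsupp.equivMapDomain (Equiv.addRight k) x.toAdd) := by
  have gen_apply : ∀ y : Multiplicative (ℤ →₀ V),
      (AddEquiv.toMultiplicative shiftEquiv) y
        = Multiplicative.ofAdd (Finsupp.equivMapDomain (Equiv.addRight (1 : ℤ)) y.toAdd) := by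
    intro y; rfl
  have trans_add : ∀ (a b : ℤ) (w : ℤ →₀ V),
      Finsupp.equivMapDomain (Equiv.addRight b) (Finsupp.equivMapDomain (Equiv.addRight a) w)
        = Finsupp.equivMapDomain (Equiv.addRight (a + b)) w := by
    intro a b w
    rw [← Finsupp.equivMapDomain_trans]
    congr 1
    ext c
    simp [add_assoc]
  have id_case : ∀ w : ℤ →₀ V, Finsupp.equivMapDomain (Equiv.addRight (0 : ℤ)) w = w := by
    intro w
    refine Finsupp.ext fun a => ?_
    rw [Finsupp.equivMapDomain_apply]
    congr 1
    simp
    rfl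
  induction k using Int.induction_on generalizing x with
  | zero =>
      rw [ofAdd_zero, map_one]
      show x = Multiplicative.ofAdd (Finsupp.equivMapDomain (Equiv.addRight (0 : ℤ)) x.toAdd)
      rw [id_case]; rfl
  | succ k ih =>
      have : Multiplicative.ofAdd ((k : ℤ) + 1) = Multiplicative.ofAdd (k : ℤ) * Multiplicative.ofAdd (1 : ℤ) := by
        rw [← ofAdd_add]
      rw [this, map_mul]
      have h1 : (shiftAction (Multiplicative.ofAdd (1 : ℤ))) x
          = Multiplicative.ofAdd (Finsupp.equivMapDomain (Equiv.addRight (1 : ℤ)) x.toAdd) := by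
        show ((AddEquiv.toMultiplicative shiftEquiv) ^ (1 : ℤ)) x = _
        rw [zpow_one]
        exact gen_apply x
      rw [MulAut.mul_apply, h1, ih, toAdd_ofAdd, trans_add, add_comm (1 : ℤ) (k : ℤ)]
  | pred k ih =>
      have : Multiplicative.ofAdd (-(k : ℤ) - 1) = Multiplicative.ofAdd (-(k : ℤ)) * Multiplicative.ofAdd (-1 : ℤ) := by
        rw [show (-(k : ℤ) - 1) = (-(k : ℤ)) + (-1) from by ring, ← ofAdd_add]
      rw [this, map_mul]
      have hinv : (shiftAction (Multiplicative.ofAdd (-1 : ℤ))) x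
          = Multiplicative.ofAdd (Finsupp.equivMapDomain (Equiv.addRight (-1 : ℤ)) x.toAdd) := by
        show ((AddEquiv.toMultiplicative shiftEquiv) ^ (-1 : ℤ)) x = _
        rw [zpow_neg, zpow_one]
        have : (AddEquiv.toMultiplicative shiftEquiv)
            (Multiplicative.ofAdd (Finsupp.equivMapDomain (Equiv.addRight (-1 : ℤ)) x.toAdd)) = x := by
          rw [gen_apply, toAdd_ofAdd, trans_add,
            show (-1 : ℤ) + 1 = 0 from by ring, id_case]
          rfl
        calc (AddEquiv.toMultiplicative shiftEquiv)⁻¹ x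
            = (AddEquiv.toMultiplicative shiftEquiv)⁻¹ ((AddEquiv.toMultiplicative shiftEquiv)
                (Multiplicative.ofAdd (Finsupp.equivMapDomain (Equiv.addRight (-1 : ℤ)) x.toAdd))) := by rw [this]
          _ = _ := by
              rw [← MulAut.mul_apply, inv_mul_cancel, MulAut.one_apply]
      rw [MulAut.mul_apply, hinv, ih, toAdd_ofAdd, trans_add,
        show (-1 : ℤ) + -(k : ℤ) = -(k : ℤ) - 1 from by ring]

lemma compat : ∀ g : Multiplicative ℤ,
    f₁.comp ((shiftAction g).toMonoidHom)
      = (MulAut.conj (f₂ g)).toMonoidHom.comp f₁ := by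
  intro g
  refine MonoidHom.ext fun x => ?_
  refine Equiv.ext fun h => ?_
  show f₁ ((shiftAction g) x) h = (f₂ g * f₁ x * (f₂ g)⁻¹) h
  have hg : g = Multiplicative.ofAdd g.toAdd := rfl
  rw [hg, shiftAction_apply]
  rw [f₁_apply, toAdd_ofAdd, θ_shift]
  rw [Equiv.Perm.mul_apply, Equiv.Perm.mul_apply]
  set y := (f₂ (Multiplicative.ofAdd g.toAdd))⁻¹ h with hy
  have hyy : f₂ (Multiplicative.ofAdd g.toAdd) y = h := perm_apply_inv_self _ h
  rw [f₁_apply, f₂_apply, ← hyy, f₂_apply, toAdd_ofAdd]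
  ring

/-- The main homomorphism from the lamplighter group to permutations of `R`. -/
def ψ : Lamplighter →* Equiv.Perm R := SemidirectProduct.lift f₁ f₂ compat

lemma ψ_apply (x : Lamplighter) : ψ x = f₁ x.left * f₂ x.right := rfl

lemma ψ_inj : Function.Injective ψ := by
  rw [injective_iff_map_eq_one]
  intro a ha
  rw [ψ_apply] at ha
  have h0 : θ a.left.toAdd = 0 := by
    have := congrFun (congrArg (fun (e : Equiv.Perm R) => (e : R → R)) ha) 0
    simp only [Equiv.Perm.mul_apply, Equiv.Perm.coe_one, id_eq] at this
    rw [f₂_apply, f₁_apply, zero_mul, zero_add] at this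
    exact this
  have hleft : a.left = 1 := by
    have := θ_inj h0
    rw [← toAdd_one] at this
    exact Multiplicative.toAdd.injective this
  rw [hleft, map_one, one_mul] at ha
  have h1 : F a.right.toAdd = 1 := by
    have := congrFun (congrArg (fun (e : Equiv.Perm R) => (e : R → R)) ha) 1
    simpa [f₂_apply] using this
  have hk : a.right.toAdd = 0 := by
    apply F_inj
    refine Units.ext ?_
    rw [Units.val_one]
    rw [F] at h1
    exact h1
  have hright : a.right = 1 := by
    rw [← toAdd_one] at hk
    exact Multiplicative.toAdd.injective hk
  exact SemidirectProduct.ext hleft hright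

-- ## The closure of the generators equals the range of ψ

lemma zmod2_cases (z : ZMod 2) : z = 0 ∨ z = 1 := by revert z; decide

def wa : ℤ →₀ V := Finsupp.single (0 : ℤ) ((1 : ZMod 2), (1 : ZMod 2))
  + Finsupp.single (1 : ℤ) ((1 : ZMod 2), (0 : ZMod 2))
def wb : ℤ →₀ V := Finsupp.single (1 : ℤ) ((1 : ZMod 2), (0 : ZMod 2))
def wc : ℤ →₀ V := Finsupp.single (0 : ℤ) ((1 : ZMod 2), (0 : ZMod 2))
  + Finsupp.single (1 : ℤ) ((1 : ZMod 2), (0 : ZMod 2))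
def wd : ℤ →₀ V := Finsupp.single (0 : ℤ) ((0 : ZMod 2), (1 : ZMod 2))
  + Finsupp.single (1 : ℤ) ((1 : ZMod 2), (0 : ZMod 2))

lemma θ_wa : θ wa = ga := by
  rw [wa, θ_add, θ_single, θ_single, term, term, F_zero, F_one]
  simp only [one_smul, zero_smul, add_zero, mul_one]
  linear_combination id_ga

lemma θ_wb : θ wb = gb := by
  rw [wb, θ_single, term, F_one]
  simp only [one_smul, zero_smul, add_zero]
  linear_combination id_gb

lemma θ_wc : θ wc = gc := by
  rw [wc, θ_add, θ_single, θ_single, term, term, F_zero, F_one]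
  simp only [one_smul, zero_smul, add_zero, mul_one]
  linear_combination id_gc

lemma θ_wd : θ wd = gd := by
  rw [wd, θ_add, θ_single, θ_single, term, term, F_zero, F_one]
  simp only [one_smul, zero_smul, add_zero, zero_add, mul_one]
  linear_combination id_gd

lemma ψ_gen (w : ℤ →₀ V) (gg : R) (h : θ w = gg) :
    ψ ⟨Multiplicative.ofAdd w, Multiplicative.ofAdd 1⟩ = affine fU gg := by
  refine Equiv.ext fun x => ?_
  rw [ψ_apply ⟨Multiplicative.ofAdd w, Multiplicative.ofAdd 1⟩, Equiv.Perm.mul_apply, f₂_apply, f₁_apply]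
  show x * F ((1 : ℤ)) + θ w = _
  rw [h, F_one, affine_apply, fU_val]

lemma closure_le : Subgroup.closure ({A, B, _root_.C, D} : Set (Equiv.Perm R)) ≤ ψ.range := by
  rw [Subgroup.closure_le]
  intro x hx
  simp only [Set.mem_insert_iff, Set.mem_singleton_iff] at hx
  rcases hx with rfl | rfl | rfl | rfl
  · exact ⟨⟨Multiplicative.ofAdd wa, Multiplicative.ofAdd 1⟩, ψ_gen wa ga θ_wa⟩
  · exact ⟨⟨Multiplicative.ofAdd wb, Multiplicative.ofAdd 1⟩, ψ_gen wb gb θ_wb⟩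
  · exact ⟨⟨Multiplicative.ofAdd wc, Multiplicative.ofAdd 1⟩, ψ_gen wc gc θ_wc⟩
  · exact ⟨⟨Multiplicative.ofAdd wd, Multiplicative.ofAdd 1⟩, ψ_gen wd gd θ_wd⟩

-- membership lemmas
lemma hA_mem : A ∈ Subgroup.closure ({A, B, _root_.C, D} : Set (Equiv.Perm R)) :=
  Subgroup.subset_closure (by simp)
lemma hC_mem : _root_.C ∈ Subgroup.closure ({A, B, _root_.C, D} : Set (Equiv.Perm R)) :=
  Subgroup.subset_closure (by simp)
lemma hD_mem : D ∈ Subgroup.closure ({A, B, _root_.C, D} : Set (Equiv.Perm R)) :=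
  Subgroup.subset_closure (by simp)

lemma hAy : ∀ y x0 : R, A (y + x0) = A y + x0 * f := by
  intro y x0; simp [A]; ring

lemma conj_up (x0 : R) : A * tr x0 * A⁻¹ = tr (x0 * f) := by
  refine Equiv.ext fun h => ?_
  rw [Equiv.Perm.mul_apply, Equiv.Perm.mul_apply, tr_apply, hAy,
    perm_apply_inv_self, tr_apply]

lemma conj_down (x0 : R) : A⁻¹ * tr x0 * A = tr (x0 * ((fU⁻¹ : Rˣ) : R)) := by
  refine Equiv.ext fun h => ?_
  rw [Equiv.Perm.mul_apply, Equiv.Perm.mul_apply, tr_apply, tr_apply]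
  apply A.injective
  rw [perm_apply_inv_self, hAy, mul_assoc,
    show ((fU⁻¹ : Rˣ) : R) * f = 1 from by rw [← fU_val]; exact Units.inv_mul fU, mul_one]

lemma AD_eq : A * D⁻¹ = tr t := by
  have h : ∀ y, A y = D y + t := by
    intro y; simp [A, D]; linear_combination id_ad
  refine Equiv.ext fun h' => ?_
  rw [Equiv.Perm.mul_apply, h, perm_apply_inv_self, tr_apply]

lemma AC_eq : A * _root_.C⁻¹ = tr (t ^ 2) := by
  have h : ∀ y, A y = _root_.C y + t ^ 2 := by
    intro y; simp [A, _root_.C]; linear_combination id_ac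
  refine Equiv.ext fun h' => ?_
  rw [Equiv.Perm.mul_apply, h, perm_apply_inv_self, tr_apply]

lemma F_succ (n : ℤ) : F (n + 1) = F n * f := by rw [F_add, F_one]

lemma F_pred (n : ℤ) : F (n - 1) = F n * ((fU⁻¹ : Rˣ) : R) := by
  rw [F, F, zpow_sub_one, Units.val_mul]

lemma memT : ∀ n : ℤ,
    tr (t * F n) ∈ Subgroup.closure ({A, B, _root_.C, D} : Set (Equiv.Perm R))
    ∧ tr (t ^ 2 * F n) ∈ Subgroup.closure ({A, B, _root_.C, D} : Set (Equiv.Perm R)) := by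
  intro n
  induction n using Int.induction_on with
  | zero =>
      rw [F_zero, mul_one, mul_one]
      constructor
      · rw [← AD_eq]; exact mul_mem hA_mem (inv_mem hD_mem)
      · rw [← AC_eq]; exact mul_mem hA_mem (inv_mem hC_mem)
  | succ k ih =>
      have e1 : t * F ((k : ℤ) + 1) = (t * F k) * f := by rw [F_succ]; ring
      have e2 : t ^ 2 * F ((k : ℤ) + 1) = (t ^ 2 * F k) * f := by rw [F_succ]; ring
      constructor
      · rw [e1, ← conj_up]
        exact mul_mem (mul_mem hA_mem ih.1) (inv_mem hA_mem)
      · rw [e2, ← conj_up]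
        exact mul_mem (mul_mem hA_mem ih.2) (inv_mem hA_mem)
  | pred k ih =>
      have e1 : t * F (-(k : ℤ) - 1) = (t * F (-k)) * ((fU⁻¹ : Rˣ) : R) := by rw [F_pred]; ring
      have e2 : t ^ 2 * F (-(k : ℤ) - 1) = (t ^ 2 * F (-k)) * ((fU⁻¹ : Rˣ) : R) := by
        rw [F_pred]; ring
      constructor
      · rw [e1, ← conj_down]
        exact mul_mem (mul_mem (inv_mem hA_mem) ih.1) hA_mem
      · rw [e2, ← conj_down]
        exact mul_mem (mul_mem (inv_mem hA_mem) ih.2) hA_mem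

lemma memTerm (n : ℤ) (ab : V) :
    tr (term n ab) ∈ Subgroup.closure ({A, B, _root_.C, D} : Set (Equiv.Perm R)) := by
  have hsplit : term n ab = ab.1 • (t * F n) + ab.2 • (t ^ 2 * F n) := by
    rw [term, add_mul, smul_mul_assoc, smul_mul_assoc]
  rcases zmod2_cases ab.1 with h1 | h1 <;> rcases zmod2_cases ab.2 with h2 | h2
  · rw [hsplit, h1, h2, zero_smul, zero_smul, add_zero, tr_zero]; exact one_mem _
  · rw [hsplit, h1, h2, zero_smul, one_smul, zero_add]; exact (memT n).2
  · rw [hsplit, h1, h2, one_smul, zero_smul, add_zero]; exact (memT n).1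
  · rw [hsplit, h1, h2, one_smul, one_smul, tr_add]
    exact mul_mem (memT n).1 (memT n).2

lemma memθ (w : ℤ →₀ V) :
    tr (θ w) ∈ Subgroup.closure ({A, B, _root_.C, D} : Set (Equiv.Perm R)) := by
  induction w using Finsupp.induction with
  | zero => rw [θ_zero, tr_zero]; exact one_mem _
  | single_add n ab w hn hab ih =>
      rw [θ_add, θ_single, tr_add]
      exact mul_mem (memTerm n ab) ih

lemma memE : mulR fU ∈ Subgroup.closure ({A, B, _root_.C, D} : Set (Equiv.Perm R)) := by
  have h1 : mulR fU = tr ga * A := by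
    refine Equiv.ext fun h => ?_
    rw [Equiv.Perm.mul_apply, mulR_apply, tr_apply]
    show h * (fU : R) = A h + ga
    simp only [A, affine_apply]
    rw [add_assoc, add_self, add_zero]
  rw [h1]
  exact mul_mem (θ_wa ▸ memθ wa) hA_mem

lemma range_le : ψ.range ≤ Subgroup.closure ({A, B, _root_.C, D} : Set (Equiv.Perm R)) := by
  rintro x ⟨y, rfl⟩
  have hy : ψ y = ψ (SemidirectProduct.inl y.left) * ψ (SemidirectProduct.inr y.right) :=
    (congrArg ψ (SemidirectProduct.inl_left_mul_inr_right y).symm).trans (map_mul ψ _ _)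
  rw [hy]
  refine mul_mem ?_ ?_
  · rw [show ψ (SemidirectProduct.inl y.left) = f₁ y.left from
      SemidirectProduct.lift_inl f₁ f₂ compat y.left]
    exact memθ _
  · rw [show ψ (SemidirectProduct.inr y.right) = f₂ y.right from
      SemidirectProduct.lift_inr f₁ f₂ compat y.right]
    show mulR (fU ^ y.right.toAdd) ∈ _
    rw [map_zpow]
    exact zpow_mem memE _

lemma closure_eq :
    Subgroup.closure ({A, B, _root_.C, D} : Set (Equiv.Perm R)) = ψ.range :=
  le_antisymm closure_le range_le

end AutLamp

/-- The subgroup of `Equiv.Perm R` generated by the four affine bijections `A`, `B`, `C`, `D`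
is isomorphic to the rank-2 lamplighter group `(ℤ₂ × ℤ₂) ≀ ℤ`. -/
theorem automaton_group_iso_lamplighter :
    Nonempty ((Subgroup.closure ({A, B, _root_.C, D} : Set (Equiv.Perm R))) ≃* Lamplighter) := by
  exact ⟨(MulEquiv.subgroupCongr AutLamp.closure_eq).trans
    (MonoidHom.ofInjective AutLamp.ψ_inj).symm⟩

end
end

section
/- If q ∈ (ZMod 2)[Y] is a polynomial of degree at least 2, then the degree of the polynomial ψ_q + ψ_{Y·ψ_q} equals (degree of q) − 2. -/
noncomputable section

/-- `φ_0 = 0` and `φ_n = Y + Y² + ⋯ + Yⁿ = ∑_{i=1}^n Yⁱ` for `n ≥ 1`, in `(ZMod 2)[Y]`. -/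
def phi (n : ℕ) : Polynomial (ZMod 2) := ∑ i ∈ Finset.Icc 1 n, Polynomial.X ^ i

/-- For `q = ∑_{i=0}^n c_i Yⁱ` in `(ZMod 2)[Y]` (with `n` the degree of `q`),
`ψ_q = ∑_{i=1}^n c_i φ_{i-1}`. -/
def psi (q : Polynomial (ZMod 2)) : Polynomial (ZMod 2) :=
  ∑ i ∈ Finset.Icc 1 q.natDegree, Polynomial.C (q.coeff i) * phi (i - 1)

end

open Polynomial Finset

private lemma phi_coeff (n k : ℕ) :
    (phi n).coeff k = if 1 ≤ k ∧ k ≤ n then 1 else 0 := by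
  simp only [phi, finset_sum_coeff, coeff_X_pow]
  simp [Finset.sum_ite_eq, Finset.mem_Icc]

private lemma psi_coeff (q : Polynomial (ZMod 2)) (k : ℕ) (hk : 1 ≤ k) :
    (psi q).coeff k = ∑ i ∈ Finset.Icc (k + 1) q.natDegree, q.coeff i := by
  simp only [psi, finset_sum_coeff, coeff_C_mul, phi_coeff]
  have h1 : ∀ i ∈ Finset.Icc 1 q.natDegree,
      q.coeff i * (if 1 ≤ k ∧ k ≤ i - 1 then (1 : ZMod 2) else 0)
        = if k + 1 ≤ i then q.coeff i else 0 := by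
    intro i hi
    simp only [Finset.mem_Icc] at hi
    by_cases h : k + 1 ≤ i
    · rw [if_pos h, if_pos ⟨hk, by omega⟩, mul_one]
    · rw [if_neg h, if_neg (by omega), mul_zero]
  rw [Finset.sum_congr rfl h1, ← Finset.sum_filter]
  congr 1
  ext i
  simp only [Finset.mem_filter, Finset.mem_Icc]
  omega

private lemma zmod2_add_self (a : ZMod 2) : a + a = 0 := by
  fin_cases a <;> decide

/-- If `q` has degree at least `2`, then `ψ_q + ψ_{Y·ψ_q}` has degree `(deg q) − 2`. -/
theorem psi_add_psi_degree (q : Polynomial (ZMod 2)) (hq : 2 ≤ q.natDegree) :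
    (psi q + psi (Polynomial.X * psi q)).natDegree = q.natDegree - 2 := by
  set n := q.natDegree with hn
  set p := psi q with hp
  have hq0 : q ≠ 0 := by
    intro h
    rw [h, Polynomial.natDegree_zero] at hn
    omega
  have hcn : q.coeff n ≠ 0 := by
    simpa [Polynomial.leadingCoeff, ← hn] using Polynomial.leadingCoeff_ne_zero.mpr hq0
  have hpk : ∀ k, 1 ≤ k → p.coeff k = ∑ i ∈ Finset.Icc (k + 1) n, q.coeff i :=
    fun k hk => psi_coeff q k hk
  have hptop : p.coeff (n - 1) = q.coeff n := by
    rw [hpk (n - 1) (by omega), show n - 1 + 1 = n by omega, Finset.Icc_self,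
      Finset.sum_singleton]
  have hphigh : ∀ k, n - 1 < k → p.coeff k = 0 := by
    intro k hk
    rw [hpk k (by omega), Finset.Icc_eq_empty (by omega), Finset.sum_empty]
  have hpne : p ≠ 0 := by
    intro h
    rw [h, Polynomial.coeff_zero] at hptop
    exact hcn hptop.symm
  have hpdeg : p.natDegree = n - 1 := by
    apply le_antisymm
    · exact Polynomial.natDegree_le_iff_coeff_eq_zero.mpr hphigh
    · exact Polynomial.le_natDegree_of_ne_zero (hptop ▸ hcn)
  have hrdeg : (Polynomial.X * p).natDegree = n := by
    rw [Polynomial.natDegree_mul Polynomial.X_ne_zero hpne, Polynomial.natDegree_X, hpdeg]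
    omega
  have hrc : ∀ k, 1 ≤ k →
      (psi (Polynomial.X * p)).coeff k = ∑ j ∈ Finset.Icc k (n - 1), p.coeff j := by
    intro k hk
    rw [psi_coeff _ k hk, hrdeg,
      show Finset.Icc (k + 1) n = (Finset.Icc k (n - 1)).map (addRightEmbedding 1) by
        rw [Finset.map_add_right_Icc]
        congr 1
        omega,
      Finset.sum_map]
    refine Finset.sum_congr rfl fun j _ => ?_
    simp [addRightEmbedding, Polynomial.coeff_X_mul]
  have hsc : ∀ k, 1 ≤ k → (p + psi (Polynomial.X * p)).coeff k
      = p.coeff k + ∑ j ∈ Finset.Icc k (n - 1), p.coeff j := by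
    intro k hk
    rw [Polynomial.coeff_add, hrc k hk]
  have hs_high : ∀ m, n - 2 < m → (p + psi (Polynomial.X * p)).coeff m = 0 := by
    intro m hm
    rw [hsc m (by omega)]
    rcases le_or_gt n m with h | h
    · rw [hphigh m (by omega), Finset.Icc_eq_empty (by omega), Finset.sum_empty, add_zero]
    · have hm' : m = n - 1 := by omega
      rw [hm', Finset.Icc_self, Finset.sum_singleton, zmod2_add_self]
  have hle : (p + psi (Polynomial.X * p)).natDegree ≤ n - 2 :=
    Polynomial.natDegree_le_iff_coeff_eq_zero.mpr hs_high
  rcases eq_or_lt_of_le hq with h2 | h3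
  · have : (p + psi (Polynomial.X * p)).natDegree = 0 := by omega
    rw [this, ← h2]
  · -- n ≥ 3
    have htop : (p + psi (Polynomial.X * p)).coeff (n - 2) = q.coeff n := by
      rw [hsc (n - 2) (by omega),
        show Finset.Icc (n - 2) (n - 1) = {n - 2, n - 1} by
          ext i
          simp only [Finset.mem_Icc, Finset.mem_insert, Finset.mem_singleton]
          omega,
        Finset.sum_pair (by omega : n - 2 ≠ n - 1), ← add_assoc, zmod2_add_self, zero_add,
        hptop]
    have hge : n - 2 ≤ (p + psi (Polynomial.X * p)).natDegree :=
      Polynomial.le_natDegree_of_ne_zero (htop ▸ hcn)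
    omega
end
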